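/- For a nonnegative random variable X, deterministic Φ ≥ N^{-C} with E X^p ≤ N^{C_p} for all p: X is stochastically dominated by Φ (i.e., for all ε, D > 0, P(X > N^ε Φ) ≤ N^{-D} for large N) if and only if for every fixed n, E X^n ≤ N^ε Φ^n for all ε > 0 and large N. -/

import Mathlib

open MeasureTheory

/-- Equivalence between stochastic domination `X ≺ Φ` and high-moment bounds
`E Xⁿ ≤ N^ε Φⁿ`, for nonnegative random variables `X = X^{(N)}` with
deterministic control parameter `Φ ≥ N^{-C}` and polynomially bounded moments. -/
theorem stochastic_domination_iff_moments {Ω : Type*} [MeasureSpace Ω]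
    [IsProbabilityMeasure (volume : Measure Ω)]
    (X : ℕ → Ω → ℝ) (hXmeas : ∀ N, Measurable (X N)) (hXpos : ∀ N ω, 0 ≤ X N ω)
    (Φ : ℕ → ℝ) (C : ℝ) (hΦ : ∀ N : ℕ, 1 ≤ N → (N : ℝ) ^ (-C) ≤ Φ N)
    (hmom : ∀ p : ℕ, ∃ Cp : ℝ, ∀ N : ℕ, 1 ≤ N →
      ∫⁻ ω, ENNReal.ofReal (X N ω ^ p) ≤ ENNReal.ofReal ((N : ℝ) ^ Cp)) :
    (∀ ε > (0 : ℝ), ∀ D > (0 : ℝ), ∃ N₀ : ℕ, ∀ N ≥ N₀,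
        volume {ω | X N ω > (N : ℝ) ^ ε * Φ N} ≤ ENNReal.ofReal ((N : ℝ) ^ (-D))) ↔
      (∀ n : ℕ, ∀ ε > (0 : ℝ), ∃ N₀ : ℕ, ∀ N ≥ N₀,
        ∫⁻ ω, ENNReal.ofReal (X N ω ^ n) ≤ ENNReal.ofReal ((N : ℝ) ^ ε * Φ N ^ n)) := by
  constructor
  · -- domination → moments
    intro h n ε hε
    rcases Nat.eq_zero_or_pos n with hn0 | hn0
    · subst hn0
      refine ⟨1, fun N hN => ?_⟩
      have hNR : (1 : ℝ) ≤ (N : ℝ) := by exact_mod_cast hN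
      have h1 : (1 : ℝ) ≤ (N : ℝ) ^ ε := Real.one_le_rpow hNR hε.le
      simp only [pow_zero]
      rw [lintegral_const, measure_univ, mul_one]
      apply ENNReal.ofReal_le_ofReal; linarith
    · have hnR : (0 : ℝ) < (n : ℝ) := by exact_mod_cast hn0
      set δ : ℝ := ε / (3 * n) with hδdef
      have hδ : 0 < δ := by positivity
      obtain ⟨C1, hC1⟩ := hmom (n + 1)
      set K : ℝ := C1 + C * n with hKdef
      set D : ℝ := max (K * n + C * n) 1 with hDdef
      have hD : (0 : ℝ) < D := lt_of_lt_of_le one_pos (le_max_right _ _)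
      obtain ⟨N₀, hN₀⟩ := h δ hδ D hD
      have h3 : ∀ᶠ N : ℕ in Filter.atTop, (3 : ℝ) ≤ (N : ℝ) ^ (2 * ε / 3) := by
        have ht := (tendsto_rpow_atTop (y := 2 * ε / 3) (by positivity)).comp
          (tendsto_natCast_atTop_atTop (R := ℝ))
        exact ht.eventually_ge_atTop 3
      obtain ⟨N₁, hN₁⟩ := Filter.eventually_atTop.mp h3
      refine ⟨max (max N₀ N₁) 1, fun N hN => ?_⟩
      have hN1 : 1 ≤ N := le_trans (le_max_right _ _) hN
      have hNN₀ : N₀ ≤ N := le_trans (le_trans (le_max_left _ _) (le_max_left _ _)) hN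
      have hNN₁ : N₁ ≤ N := le_trans (le_trans (le_max_right _ _) (le_max_left _ _)) hN
      have hNR : (1 : ℝ) ≤ (N : ℝ) := by exact_mod_cast hN1
      have hNpos : (0 : ℝ) < (N : ℝ) := by linarith
      have hΦN := hΦ N hN1
      have hΦpos : 0 < Φ N := lt_of_lt_of_le (Real.rpow_pos_of_pos hNpos _) hΦN
      set A : Set Ω := {ω | X N ω > (N : ℝ) ^ δ * Φ N} with hAdef
      have hA : MeasurableSet A := measurableSet_lt measurable_const (hXmeas N)
      have hPA : volume A ≤ ENNReal.ofReal ((N : ℝ) ^ (-D)) := hN₀ N hNN₀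
      have hI : ∫⁻ ω, ENNReal.ofReal (X N ω ^ (n + 1)) ≤ ENNReal.ofReal ((N : ℝ) ^ C1) :=
        hC1 N hN1
      -- pointwise bound
      have hpt : ∀ ω, ENNReal.ofReal (X N ω ^ n) ≤
          ENNReal.ofReal (((N : ℝ) ^ δ * Φ N) ^ n)
          + A.indicator (fun _ => ENNReal.ofReal ((N : ℝ) ^ (K * n))) ω
          + ENNReal.ofReal (X N ω ^ (n + 1)) * ENNReal.ofReal ((N : ℝ) ^ (-K)) := by
        intro ω
        by_cases h1 : X N ω ≤ (N : ℝ) ^ δ * Φ N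
        · have hx : X N ω ^ n ≤ ((N : ℝ) ^ δ * Φ N) ^ n :=
            pow_le_pow_left₀ (hXpos N ω) h1 n
          exact le_add_right (le_add_right (ENNReal.ofReal_le_ofReal hx))
        · push_neg at h1
          have hmem : ω ∈ A := h1
          by_cases h2 : X N ω ≤ (N : ℝ) ^ K
          · have hx : X N ω ^ n ≤ (N : ℝ) ^ (K * n) := by
              calc X N ω ^ n ≤ ((N : ℝ) ^ K) ^ n := pow_le_pow_left₀ (hXpos N ω) h2 n
                _ = (N : ℝ) ^ (K * n) := by
                    rw [← Real.rpow_natCast ((N : ℝ) ^ K) n, ← Real.rpow_mul hNpos.le]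
            calc ENNReal.ofReal (X N ω ^ n) ≤ ENNReal.ofReal ((N : ℝ) ^ (K * n)) :=
                  ENNReal.ofReal_le_ofReal hx
              _ = A.indicator (fun _ => ENNReal.ofReal ((N : ℝ) ^ (K * n))) ω :=
                  (Set.indicator_of_mem hmem (fun _ => ENNReal.ofReal ((N : ℝ) ^ (K * (n:ℝ))))).symm
              _ ≤ _ := le_add_right (le_add_left le_rfl)
          · push_neg at h2
            have hx : X N ω ^ n ≤ X N ω ^ (n + 1) * (N : ℝ) ^ (-K) := by
              have hmul : X N ω ^ n * (N : ℝ) ^ K ≤ X N ω ^ (n + 1) := by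
                rw [pow_succ]
                exact mul_le_mul_of_nonneg_left h2.le (pow_nonneg (hXpos N ω) n)
              calc X N ω ^ n
                  = X N ω ^ n * (N : ℝ) ^ K * (N : ℝ) ^ (-K) := by
                    rw [mul_assoc, ← Real.rpow_add hNpos, add_neg_cancel,
                      Real.rpow_zero, mul_one]
                _ ≤ X N ω ^ (n + 1) * (N : ℝ) ^ (-K) :=
                    mul_le_mul_of_nonneg_right hmul (Real.rpow_nonneg hNpos.le _)
            calc ENNReal.ofReal (X N ω ^ n)
                ≤ ENNReal.ofReal (X N ω ^ (n + 1) * (N : ℝ) ^ (-K)) :=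
                  ENNReal.ofReal_le_ofReal hx
              _ = ENNReal.ofReal (X N ω ^ (n + 1)) * ENNReal.ofReal ((N : ℝ) ^ (-K)) :=
                  ENNReal.ofReal_mul (pow_nonneg (hXpos N ω) _)
              _ ≤ _ := le_add_self
      have hmeasg : Measurable (A.indicator
          (fun _ : Ω => ENNReal.ofReal ((N : ℝ) ^ (K * n)))) :=
        measurable_const.indicator hA
      have hmeasf : Measurable (fun ω => ENNReal.ofReal (X N ω ^ (n + 1))) :=
        ENNReal.measurable_ofReal.comp ((hXmeas N).pow_const (n + 1))
      have hint : ∫⁻ ω, ENNReal.ofReal (X N ω ^ n) ≤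
          ENNReal.ofReal (((N : ℝ) ^ δ * Φ N) ^ n)
          + ENNReal.ofReal ((N : ℝ) ^ (K * n)) * volume A
          + (∫⁻ ω, ENNReal.ofReal (X N ω ^ (n + 1))) * ENNReal.ofReal ((N : ℝ) ^ (-K)) := by
        calc ∫⁻ ω, ENNReal.ofReal (X N ω ^ n)
            ≤ ∫⁻ ω, (ENNReal.ofReal (((N : ℝ) ^ δ * Φ N) ^ n)
              + A.indicator (fun _ => ENNReal.ofReal ((N : ℝ) ^ (K * n))) ω
              + ENNReal.ofReal (X N ω ^ (n + 1)) * ENNReal.ofReal ((N : ℝ) ^ (-K))) :=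
              lintegral_mono hpt
          _ = _ := by
              rw [lintegral_add_right _ (hmeasf.mul_const _),
                lintegral_add_right _ hmeasg, lintegral_const, measure_univ, mul_one,
                lintegral_indicator_const hA, lintegral_mul_const _ hmeasf]
      have hbound : ENNReal.ofReal (((N : ℝ) ^ δ * Φ N) ^ n)
          + ENNReal.ofReal ((N : ℝ) ^ (K * n)) * volume A
          + (∫⁻ ω, ENNReal.ofReal (X N ω ^ (n + 1))) * ENNReal.ofReal ((N : ℝ) ^ (-K))
          ≤ ENNReal.ofReal (((N : ℝ) ^ δ * Φ N) ^ n + (N : ℝ) ^ (K * n - D)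
            + (N : ℝ) ^ (C1 - K)) := by
        have e1 : ENNReal.ofReal ((N : ℝ) ^ (K * n)) * volume A
            ≤ ENNReal.ofReal ((N : ℝ) ^ (K * n - D)) := by
          calc ENNReal.ofReal ((N : ℝ) ^ (K * n)) * volume A
              ≤ ENNReal.ofReal ((N : ℝ) ^ (K * n)) * ENNReal.ofReal ((N : ℝ) ^ (-D)) :=
                mul_le_mul_right hPA _
            _ = ENNReal.ofReal ((N : ℝ) ^ (K * n - D)) := by
                rw [← ENNReal.ofReal_mul (Real.rpow_nonneg hNpos.le _),
                  ← Real.rpow_add hNpos]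
                ring_nf
        have e2 : (∫⁻ ω, ENNReal.ofReal (X N ω ^ (n + 1)))
            * ENNReal.ofReal ((N : ℝ) ^ (-K))
            ≤ ENNReal.ofReal ((N : ℝ) ^ (C1 - K)) := by
          calc (∫⁻ ω, ENNReal.ofReal (X N ω ^ (n + 1))) * ENNReal.ofReal ((N : ℝ) ^ (-K))
              ≤ ENNReal.ofReal ((N : ℝ) ^ C1) * ENNReal.ofReal ((N : ℝ) ^ (-K)) :=
                mul_le_mul_left hI _
            _ = ENNReal.ofReal ((N : ℝ) ^ (C1 - K)) := by
                rw [← ENNReal.ofReal_mul (Real.rpow_nonneg hNpos.le _),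
                  ← Real.rpow_add hNpos]
                ring_nf
        calc ENNReal.ofReal (((N : ℝ) ^ δ * Φ N) ^ n)
            + ENNReal.ofReal ((N : ℝ) ^ (K * n)) * volume A
            + (∫⁻ ω, ENNReal.ofReal (X N ω ^ (n + 1))) * ENNReal.ofReal ((N : ℝ) ^ (-K))
            ≤ ENNReal.ofReal (((N : ℝ) ^ δ * Φ N) ^ n)
              + ENNReal.ofReal ((N : ℝ) ^ (K * n - D))
              + ENNReal.ofReal ((N : ℝ) ^ (C1 - K)) :=
              add_le_add (add_le_add le_rfl e1) e2
          _ = _ := by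
              rw [← ENNReal.ofReal_add (by positivity) (by positivity),
                ← ENNReal.ofReal_add (by positivity) (by positivity)]
      refine le_trans hint (le_trans hbound (ENNReal.ofReal_le_ofReal ?_))
      -- real-number inequality
      have hPpos : (0 : ℝ) < Φ N ^ n := pow_pos hΦpos n
      have hT1 : ((N : ℝ) ^ δ * Φ N) ^ n = (N : ℝ) ^ (ε / 3) * Φ N ^ n := by
        rw [mul_pow, ← Real.rpow_natCast ((N : ℝ) ^ δ) n, ← Real.rpow_mul hNpos.le]
        congr 2
        field_simp [hδdef]
        rw [hδdef]; field_simp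
      have hCn : (N : ℝ) ^ (-(C * n)) ≤ Φ N ^ n := by
        have : (N : ℝ) ^ (-(C * n)) = ((N : ℝ) ^ (-C)) ^ n := by
          rw [← Real.rpow_natCast ((N : ℝ) ^ (-C)) n, ← Real.rpow_mul hNpos.le]
          ring_nf
        rw [this]
        exact pow_le_pow_left₀ (Real.rpow_nonneg hNpos.le _) hΦN n
      have e1 : (N : ℝ) ^ (K * n - D) ≤ Φ N ^ n := by
        refine le_trans ?_ hCn
        apply Real.rpow_le_rpow_of_exponent_le hNR
        have := le_max_left (K * n + C * n) 1
        rw [← hDdef] at this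
        linarith
      have e2 : (N : ℝ) ^ (C1 - K) ≤ Φ N ^ n := by
        refine le_trans ?_ hCn
        apply Real.rpow_le_rpow_of_exponent_le hNR
        rw [hKdef]; ring_nf; linarith [le_refl (0:ℝ)]
      have h3N : (3 : ℝ) ≤ (N : ℝ) ^ (2 * ε / 3) := hN₁ N hNN₁
      have h1N : (1 : ℝ) ≤ (N : ℝ) ^ (ε / 3) := Real.one_le_rpow hNR (by positivity)
      have hsplit : (N : ℝ) ^ (2 * ε / 3) * (N : ℝ) ^ (ε / 3) = (N : ℝ) ^ ε := by
        rw [← Real.rpow_add hNpos]; ring_nf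
      rw [hT1]
      nlinarith [mul_le_mul_of_nonneg_right h3N (mul_nonneg (le_trans zero_le_one h1N) hPpos.le),
        mul_le_mul_of_nonneg_right h1N hPpos.le, hsplit, hPpos.le]
  · -- moments → domination
    intro h ε hε D hD
    set n : ℕ := ⌈(D + 1) / ε⌉₊ with hn
    have hεn : D + 1 ≤ ε * n := by
      have hle := Nat.le_ceil ((D + 1) / ε)
      rw [div_le_iff₀ hε] at hle
      rw [← hn] at hle
      linarith
    obtain ⟨N₀, hN₀⟩ := h n 1 one_pos
    refine ⟨max N₀ 1, fun N hN => ?_⟩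
    have hN1 : 1 ≤ N := le_trans (le_max_right _ _) hN
    have hNR : (1 : ℝ) ≤ (N : ℝ) := by exact_mod_cast hN1
    have hNpos : (0 : ℝ) < (N : ℝ) := by linarith
    have hΦpos : 0 < Φ N := lt_of_lt_of_le (Real.rpow_pos_of_pos hNpos _) (hΦ N hN1)
    have htpos : (0 : ℝ) < (N : ℝ) ^ ε * Φ N :=
      mul_pos (Real.rpow_pos_of_pos hNpos ε) hΦpos
    have htn : (0 : ℝ) < ((N : ℝ) ^ ε * Φ N) ^ n := pow_pos htpos n
    set c : ENNReal := ENNReal.ofReal (((N : ℝ) ^ ε * Φ N) ^ n) with hc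
    have hc0 : c ≠ 0 := by
      rw [hc]
      simp only [ne_eq, ENNReal.ofReal_eq_zero, not_le]
      exact htn
    have hcT : c ≠ ⊤ := ENNReal.ofReal_ne_top
    have hmeasf : AEMeasurable (fun ω => ENNReal.ofReal (X N ω ^ n)) volume :=
      (ENNReal.measurable_ofReal.comp ((hXmeas N).pow_const n)).aemeasurable
    have hmarkov := mul_meas_ge_le_lintegral₀ hmeasf c
    have hsub : {ω | X N ω > (N : ℝ) ^ ε * Φ N} ⊆
        {ω | c ≤ ENNReal.ofReal (X N ω ^ n)} := by
      intro ω hω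
      exact ENNReal.ofReal_le_ofReal (pow_le_pow_left₀ htpos.le (le_of_lt hω) n)
    have hIle := hN₀ N (le_trans (le_max_left _ _) hN)
    calc volume {ω | X N ω > (N : ℝ) ^ ε * Φ N}
        ≤ volume {ω | c ≤ ENNReal.ofReal (X N ω ^ n)} := measure_mono hsub
      _ ≤ (∫⁻ ω, ENNReal.ofReal (X N ω ^ n)) / c := by
          rw [ENNReal.le_div_iff_mul_le (Or.inl hc0) (Or.inl hcT), mul_comm]
          exact hmarkov
      _ ≤ ENNReal.ofReal ((N : ℝ) ^ (1 : ℝ) * Φ N ^ n) / c :=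
          ENNReal.div_le_div_right hIle _
      _ = ENNReal.ofReal (((N : ℝ) ^ (1 : ℝ) * Φ N ^ n) / ((N : ℝ) ^ ε * Φ N) ^ n) :=
          (ENNReal.ofReal_div_of_pos htn).symm
      _ ≤ ENNReal.ofReal ((N : ℝ) ^ (-D)) := by
          apply ENNReal.ofReal_le_ofReal
          have heq : ((N : ℝ) ^ (1 : ℝ) * Φ N ^ n) / ((N : ℝ) ^ ε * Φ N) ^ n
              = (N : ℝ) ^ ((1 : ℝ) - ε * n) := by
            rw [mul_pow, ← Real.rpow_natCast ((N : ℝ) ^ ε) n, ← Real.rpow_mul hNpos.le,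
              mul_div_mul_right _ _ (pow_ne_zero n hΦpos.ne'),
              Real.rpow_sub hNpos]
          rw [heq]
          exact Real.rpow_le_rpow_of_exponent_le hNR (by linarith)
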